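/- Let \(n\) and \(\rho<n/2\) be positive integers, \(k=\lfloor n/2\rfloor\), and let \(\sigma=(\sigma_{1},\ldots,\sigma_{k})\) be a nonzero maximizer of \(\varphi\) over the feasible set, with \(\beta\) and \(\gamma\) the minimal and maximal indices \(i\) with \(\sigma_{i}\ne0\). Then \(\beta \ge \frac{\beta+1}{4} + \frac{\gamma-\beta-2}{2} - \frac{\ln n}{4}\). -/

import Mathlib

/-- The function `φ(s₁, …, s_k) = ∑_{r=ρ}^{k} min{r²/4, ∑_{i=1}^{r} i·sᵢ}`. -/
noncomputable def phi (ρ k : ℕ) (s : ℕ → ℝ) : ℝ :=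
  ∑ r ∈ Finset.Icc ρ k, min ((r : ℝ) ^ 2 / 4) (∑ i ∈ Finset.Icc 1 r, (i : ℝ) * s i)

/-- The feasible set: nonnegative tuples summing to at most `ρ`, vanishing below `ρ`, and
satisfying `∑_{i=1}^{τ} i·sᵢ ≤ τ²/4` for all `τ ∈ {ρ, …, k}`. -/
def Feasible (ρ k : ℕ) (s : ℕ → ℝ) : Prop :=
  (∀ i ∈ Finset.Icc 1 k, 0 ≤ s i) ∧
  (∑ i ∈ Finset.Icc 1 k, s i) ≤ (ρ : ℝ) ∧
  (∀ i ∈ Finset.Icc 1 k, i < ρ → s i = 0) ∧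
  (∀ τ ∈ Finset.Icc ρ k, ∑ i ∈ Finset.Icc 1 τ, (i : ℝ) * s i ≤ (τ : ℝ) ^ 2 / 4)

noncomputable def Ssum (s : ℕ → ℝ) (r : ℕ) : ℝ := ∑ i ∈ Finset.Icc 1 r, (i : ℝ) * s i

lemma Ssum_succ (s : ℕ → ℝ) (r : ℕ) :
    Ssum s (r + 1) = Ssum s r + ((r : ℝ) + 1) * s (r + 1) := by
  unfold Ssum
  rw [Finset.sum_Icc_succ_top (by omega : 1 ≤ r + 1)]
  push_cast; ring

lemma sum_mul_ite (r a : ℕ) (c : ℝ) (ha : 1 ≤ a) :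
    ∑ i ∈ Finset.Icc 1 r, (i : ℝ) * (if i = a then c else 0)
      = if a ≤ r then (a : ℝ) * c else 0 := by
  rw [Finset.sum_congr rfl (fun i _ => by rw [mul_ite, mul_zero])]
  rw [Finset.sum_ite_eq' (Finset.Icc 1 r) a (fun i => (i : ℝ) * c)]
  simp [Finset.mem_Icc, ha]

lemma one_div_le_log_sub (N : ℕ) (hN : 0 < N) :
    1 / ((N : ℝ) + 1) ≤ Real.log ((N : ℝ) + 1) - Real.log N := by
  have hN0 : (0 : ℝ) < N := by exact_mod_cast hN
  have h1 : (0 : ℝ) < (N : ℝ) / ((N : ℝ) + 1) := by positivity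
  have h2 := Real.log_le_sub_one_of_pos h1
  rw [Real.log_div (ne_of_gt hN0) (by positivity)] at h2
  have h3 : (N : ℝ) / ((N : ℝ) + 1) - 1 = -(1 / ((N : ℝ) + 1)) := by field_simp; ring
  linarith

lemma harmonic_telescope (b : ℕ) (N : ℕ) (hN : b + 1 ≤ N) :
    ∑ i ∈ Finset.Icc (b + 2) N, (1 : ℝ) / i ≤ Real.log N - Real.log (b + 1) := by
  induction N, hN using Nat.le_induction with
  | base =>
    rw [Finset.Icc_eq_empty (by omega)]
    simp
  | succ N hN ih =>
    rw [Finset.sum_Icc_succ_top (by omega : b + 2 ≤ N + 1)]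
    have key := one_div_le_log_sub N (by omega)
    have hc : ((N : ℝ) + 1) = ((N + 1 : ℕ) : ℝ) := by push_cast; ring
    rw [hc] at key
    push_cast
    push_cast at ih key
    linarith

set_option maxHeartbeats 2000000 in
/-- Inequality (5) of the paper: at a nonzero maximizer `σ` of `φ` over the feasible set with
minimal and maximal nonzero indices `β` and `γ`,
`β ≥ (β+1)/4 + (γ-β-2)/2 - (ln n)/4`. -/
theorem maximizer_beta_gamma_inequality (n ρ : ℕ) (hn : 0 < n) (hρ : 0 < ρ)
    (hρn : (ρ : ℝ) < (n : ℝ) / 2) (σ : ℕ → ℝ)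
    (hσ : Feasible ρ (n / 2) σ)
    (hmax : ∀ τ : ℕ → ℝ, Feasible ρ (n / 2) τ → phi ρ (n / 2) τ ≤ phi ρ (n / 2) σ)
    (β γ : ℕ) (hβmem : β ∈ Finset.Icc 1 (n / 2)) (hγmem : γ ∈ Finset.Icc 1 (n / 2))
    (hβ : σ β ≠ 0) (hγ : σ γ ≠ 0)
    (hminmax : ∀ i ∈ Finset.Icc 1 (n / 2), σ i ≠ 0 → β ≤ i ∧ i ≤ γ) :
    (β : ℝ) ≥ ((β : ℝ) + 1) / 4 + ((γ : ℝ) - (β : ℝ) - 2) / 2 - Real.log n / 4 := by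
  set k := n / 2 with hk
  obtain ⟨hnn, hsum, hzero, hcap⟩ := hσ
  have hβ1 : 1 ≤ β := (Finset.mem_Icc.mp hβmem).1
  have hβk : β ≤ k := (Finset.mem_Icc.mp hβmem).2
  have hγ1 : 1 ≤ γ := (Finset.mem_Icc.mp hγmem).1
  have hγk : γ ≤ k := (Finset.mem_Icc.mp hγmem).2
  have hρβ : ρ ≤ β := by
    by_contra h
    exact hβ (hzero β hβmem (by omega))
  have hβγ : β ≤ γ := (hminmax γ hγmem hγ).1
  have hσβ : 0 < σ β := lt_of_le_of_ne (hnn β hβmem) (Ne.symm hβ)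
  have hσγ : 0 < σ γ := lt_of_le_of_ne (hnn γ hγmem) (Ne.symm hγ)
  have hlogn : 0 ≤ Real.log n := Real.log_nonneg (by exact_mod_cast hn)
  have hβR : (1 : ℝ) ≤ (β : ℝ) := by exact_mod_cast hβ1
  -- Claim 2 : tightness strictly between β and γ
  have hminlb : ∀ c x d : ℝ, 0 ≤ d → min c x - d ≤ min c (x - d) := by
    intro c x d hd
    rcases le_total c (x - d) with h | h
    · rw [min_eq_left h]
      have := min_le_left c x
      linarith
    · rw [min_eq_right h]
      have := min_le_right c x
      linarith
  have claim2 : ∀ t : ℕ, β < t → t < γ → Ssum σ t = (t : ℝ) ^ 2 / 4 := by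
    have main : ∀ m : ℕ, ∀ t : ℕ, β < t → t < γ → γ - t ≤ m →
        Ssum σ t = (t : ℝ) ^ 2 / 4 := by
      intro m
      induction m with
      | zero => intro t h1 h2 h3; omega
      | succ m ih =>
        intro t h1 h2 h3
        by_contra hne
        have htmem : t ∈ Finset.Icc ρ k := Finset.mem_Icc.mpr ⟨by omega, by omega⟩
        have hcapt : Ssum σ t ≤ (t : ℝ) ^ 2 / 4 := hcap t htmem
        have hlt : Ssum σ t < (t : ℝ) ^ 2 / 4 := lt_of_le_of_ne hcapt hne
        have ht1mem : t + 1 ∈ Finset.Icc 1 k := Finset.mem_Icc.mpr ⟨by omega, by omega⟩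
        have htR : (1 : ℝ) ≤ (t : ℝ) := by exact_mod_cast (show 1 ≤ t by omega)
        have htpos : (0 : ℝ) < (t : ℝ) := by linarith
        -- σ (t+1) is positive
        have hst1 : 0 < σ (t + 1) := by
          rcases eq_or_lt_of_le (show t + 1 ≤ γ by omega) with he | hl
          · rw [he]; exact hσγ
          · have hS1 : Ssum σ (t + 1) = ((t : ℝ) + 1) ^ 2 / 4 := by
              rw [ih (t + 1) (by omega) hl (by omega)]; push_cast; ring
            have hsplit := Ssum_succ σ t
            by_contra hc
            push_neg at hc
            have hmn : ((t : ℝ) + 1) * σ (t + 1) ≤ 0 :=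
              mul_nonpos_of_nonneg_of_nonpos (by linarith) hc
            nlinarith
        -- choice of δ
        obtain ⟨δ, hδpos, hd1, hd2, hd3⟩ : ∃ δ : ℝ, 0 < δ ∧ ((β : ℝ) + 1) * δ ≤ σ β ∧
            (t : ℝ) * δ ≤ σ (t + 1) ∧
            (t : ℝ) * (((t : ℝ) + 1) * δ) ≤ (t : ℝ) ^ 2 / 4 - Ssum σ t := by
          refine ⟨min (σ β / ((β : ℝ) + 1)) (min (σ (t + 1) / ((t : ℝ) + 1))
            (((t : ℝ) ^ 2 / 4 - Ssum σ t) / ((t : ℝ) * ((t : ℝ) + 1)))), ?_, ?_, ?_, ?_⟩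
          · apply lt_min (by positivity)
            apply lt_min (by positivity)
            apply div_pos (by linarith) (by positivity)
          · have hδ1 : min (σ β / ((β : ℝ) + 1)) (min (σ (t + 1) / ((t : ℝ) + 1))
                (((t : ℝ) ^ 2 / 4 - Ssum σ t) / ((t : ℝ) * ((t : ℝ) + 1))))
                ≤ σ β / ((β : ℝ) + 1) := min_le_left _ _
            have := (le_div_iff₀ (by positivity : (0:ℝ) < (β : ℝ) + 1)).mp hδ1
            nlinarith
          · have hδ2 : min (σ β / ((β : ℝ) + 1)) (min (σ (t + 1) / ((t : ℝ) + 1))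
                (((t : ℝ) ^ 2 / 4 - Ssum σ t) / ((t : ℝ) * ((t : ℝ) + 1))))
                ≤ σ (t + 1) / ((t : ℝ) + 1) :=
              le_trans (min_le_right _ _) (min_le_left _ _)
            have h0 : (0:ℝ) ≤ min (σ β / ((β : ℝ) + 1)) (min (σ (t + 1) / ((t : ℝ) + 1))
                (((t : ℝ) ^ 2 / 4 - Ssum σ t) / ((t : ℝ) * ((t : ℝ) + 1)))) := by
              apply le_min (by positivity)
              apply le_min (by positivity)
              apply div_nonneg (by linarith) (by positivity)
            have := (le_div_iff₀ (by positivity : (0:ℝ) < (t : ℝ) + 1)).mp hδ2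
            nlinarith
          · have hδ3 : min (σ β / ((β : ℝ) + 1)) (min (σ (t + 1) / ((t : ℝ) + 1))
                (((t : ℝ) ^ 2 / 4 - Ssum σ t) / ((t : ℝ) * ((t : ℝ) + 1))))
                ≤ ((t : ℝ) ^ 2 / 4 - Ssum σ t) / ((t : ℝ) * ((t : ℝ) + 1)) :=
              le_trans (min_le_right _ _) (min_le_right _ _)
            have := (le_div_iff₀ (by positivity : (0:ℝ) < (t : ℝ) * ((t : ℝ) + 1))).mp hδ3
            nlinarith
        -- perturbed tuple
        set τ' : ℕ → ℝ := fun i => σ i + (if i = β then -(((β : ℝ) + 1) * δ) else 0)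
            + (if i = β + 1 then (β : ℝ) * δ else 0)
            + (if i = t then ((t : ℝ) + 1) * δ else 0)
            + (if i = t + 1 then -((t : ℝ) * δ) else 0) with hτ'
        have hSdiff : ∀ r : ℕ, Ssum τ' r = Ssum σ r
            + (if β ≤ r then (β : ℝ) * (-(((β : ℝ) + 1) * δ)) else 0)
            + (if β + 1 ≤ r then ((β + 1 : ℕ) : ℝ) * ((β : ℝ) * δ) else 0)
            + (if t ≤ r then (t : ℝ) * (((t : ℝ) + 1) * δ) else 0)
            + (if t + 1 ≤ r then ((t + 1 : ℕ) : ℝ) * (-((t : ℝ) * δ)) else 0) := by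
          intro r
          unfold Ssum
          simp only [hτ', mul_add]
          rw [Finset.sum_add_distrib, Finset.sum_add_distrib, Finset.sum_add_distrib,
            Finset.sum_add_distrib]
          rw [sum_mul_ite r β _ hβ1, sum_mul_ite r (β + 1) _ (by omega),
            sum_mul_ite r t _ (by omega), sum_mul_ite r (t + 1) _ (by omega)]
        have hSo : ∀ r : ℕ, r ≠ β → r ≠ t → Ssum τ' r = Ssum σ r := by
          intro r hrβ hrt
          rw [hSdiff r]
          rcases lt_or_ge r β with h | h
          · rw [if_neg (by omega), if_neg (by omega), if_neg (by omega), if_neg (by omega)]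
            ring
          · rw [if_pos (by omega : β ≤ r), if_pos (by omega : β + 1 ≤ r)]
            rcases lt_or_ge r t with h' | h'
            · rw [if_neg (by omega), if_neg (by omega)]
              push_cast; ring
            · rw [if_pos (by omega : t ≤ r), if_pos (by omega : t + 1 ≤ r)]
              push_cast; ring
        have hSb : Ssum τ' β = Ssum σ β - (β : ℝ) * (((β : ℝ) + 1) * δ) := by
          rw [hSdiff β, if_pos le_rfl, if_neg (by omega), if_neg (by omega),
            if_neg (by omega)]
          ring
        have hSt : Ssum τ' t = Ssum σ t + (t : ℝ) * (((t : ℝ) + 1) * δ) := by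
          rw [hSdiff t, if_pos (by omega : β ≤ t), if_pos (by omega : β + 1 ≤ t),
            if_pos le_rfl, if_neg (by omega)]
          push_cast; ring
        -- feasibility of the perturbation
        have e1 : 0 ≤ (β : ℝ) * δ := by positivity
        have e2 : 0 ≤ ((t : ℝ) + 1) * δ := by positivity
        have hfeas : Feasible ρ k τ' := by
          refine ⟨?_, ?_, ?_, ?_⟩
          · intro i hi
            have h0 := hnn i hi
            simp only [hτ']
            by_cases h1 : i = β
            · subst h1
              rw [if_pos rfl, if_neg (by omega), if_neg (by omega), if_neg (by omega)]
              linarith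
            · by_cases h2 : i = t + 1
              · subst h2
                rw [if_neg (by omega), if_neg (by omega), if_neg (by omega), if_pos rfl]
                linarith
              · rw [if_neg h1, if_neg h2]
                split_ifs <;> linarith
          · have hsum' : ∑ i ∈ Finset.Icc 1 k, τ' i = ∑ i ∈ Finset.Icc 1 k, σ i := by
              simp only [hτ']
              rw [Finset.sum_add_distrib, Finset.sum_add_distrib, Finset.sum_add_distrib,
                Finset.sum_add_distrib]
              rw [Finset.sum_ite_eq' (Finset.Icc 1 k) β (fun _ => -(((β : ℝ) + 1) * δ)),
                Finset.sum_ite_eq' (Finset.Icc 1 k) (β + 1) (fun _ => (β : ℝ) * δ),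
                Finset.sum_ite_eq' (Finset.Icc 1 k) t (fun _ => ((t : ℝ) + 1) * δ),
                Finset.sum_ite_eq' (Finset.Icc 1 k) (t + 1) (fun _ => -((t : ℝ) * δ))]
              rw [if_pos hβmem, if_pos (Finset.mem_Icc.mpr ⟨by omega, by omega⟩),
                if_pos (Finset.mem_Icc.mpr ⟨by omega, by omega⟩), if_pos ht1mem]
              ring
            rw [hsum']
            exact hsum
          · intro i hi hilt
            simp only [hτ']
            rw [if_neg (by omega), if_neg (by omega), if_neg (by omega), if_neg (by omega)]
            rw [hzero i hi hilt]
            ring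
          · intro τ₀ hτ₀
            show Ssum τ' τ₀ ≤ (τ₀ : ℝ) ^ 2 / 4
            by_cases hb : τ₀ = β
            · rw [hb, hSb]
              have h0 : (0:ℝ) ≤ (β : ℝ) * (((β : ℝ) + 1) * δ) := by positivity
              have hc' : Ssum σ β ≤ (β : ℝ) ^ 2 / 4 :=
                hcap β (Finset.mem_Icc.mpr ⟨hρβ, hβk⟩)
              linarith
            · by_cases ht : τ₀ = t
              · rw [ht, hSt]
                linarith
              · rw [hSo τ₀ hb ht]
                exact hcap τ₀ hτ₀
        -- φ strictly increases : contradiction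
        have hle := hmax τ' hfeas
        have hβmemρ : β ∈ Finset.Icc ρ k := Finset.mem_Icc.mpr ⟨hρβ, hβk⟩
        have hphi : phi ρ k τ' - phi ρ k σ
            = ∑ r ∈ Finset.Icc ρ k,
              (min ((r : ℝ) ^ 2 / 4) (Ssum τ' r) - min ((r : ℝ) ^ 2 / 4) (Ssum σ r)) := by
          unfold phi Ssum
          rw [← Finset.sum_sub_distrib]
        have hpair : ({β, t} : Finset ℕ) ⊆ Finset.Icc ρ k := by
          intro x hx
          simp only [Finset.mem_insert, Finset.mem_singleton] at hx
          rcases hx with rfl | rfl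
          · exact hβmemρ
          · exact htmem
        have hsupp : ∀ r ∈ Finset.Icc ρ k, r ∉ ({β, t} : Finset ℕ) →
            min ((r : ℝ) ^ 2 / 4) (Ssum τ' r) - min ((r : ℝ) ^ 2 / 4) (Ssum σ r) = 0 := by
          intro r _ hr
          simp only [Finset.mem_insert, Finset.mem_singleton, not_or] at hr
          rw [hSo r hr.1 hr.2, sub_self]
        have hsum3 : ∑ r ∈ Finset.Icc ρ k,
              (min ((r : ℝ) ^ 2 / 4) (Ssum τ' r) - min ((r : ℝ) ^ 2 / 4) (Ssum σ r))
            = (min ((β : ℝ) ^ 2 / 4) (Ssum τ' β) - min ((β : ℝ) ^ 2 / 4) (Ssum σ β))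
              + (min ((t : ℝ) ^ 2 / 4) (Ssum τ' t) - min ((t : ℝ) ^ 2 / 4) (Ssum σ t)) := by
          rw [← Finset.sum_subset hpair hsupp, Finset.sum_pair (by omega : β ≠ t)]
        have hgβ : min ((β : ℝ) ^ 2 / 4) (Ssum τ' β) - min ((β : ℝ) ^ 2 / 4) (Ssum σ β)
            ≥ -((β : ℝ) * (((β : ℝ) + 1) * δ)) := by
          rw [hSb]
          have := hminlb ((β : ℝ) ^ 2 / 4) (Ssum σ β) ((β : ℝ) * (((β : ℝ) + 1) * δ))
            (by positivity)
          linarith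
        have hgt : min ((t : ℝ) ^ 2 / 4) (Ssum τ' t) - min ((t : ℝ) ^ 2 / 4) (Ssum σ t)
            = (t : ℝ) * (((t : ℝ) + 1) * δ) := by
          rw [hSt, min_eq_right (by linarith), min_eq_right hcapt]
          ring
        have hbt : (β : ℝ) + 1 ≤ (t : ℝ) := by exact_mod_cast (show β + 1 ≤ t by omega)
        have hβ0 : (0 : ℝ) ≤ (β : ℝ) := Nat.cast_nonneg β
        have hprod : (β : ℝ) * (((β : ℝ) + 1) * δ) < (t : ℝ) * (((t : ℝ) + 1) * δ) := by
          nlinarith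
        have hdiff : phi ρ k τ' - phi ρ k σ
            ≥ (t : ℝ) * (((t : ℝ) + 1) * δ) - (β : ℝ) * (((β : ℝ) + 1) * δ) := by
          rw [hphi, hsum3]
          linarith
        linarith
    intro t h1 h2
    exact main (γ - t) t h1 h2 le_rfl
  -- trivial case
  rcases le_or_gt γ (β + 2) with hcase | hcase
  · have hγR : (γ : ℝ) ≤ (β : ℝ) + 2 := by exact_mod_cast hcase
    linarith
  -- main case : γ ≥ β + 3
  have hβ2γ : β + 3 ≤ γ := hcase
  -- σ vanishes below β
  have hzlow : ∀ j, 1 ≤ j → j < β → σ j = 0 := by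
    intro j hj1 hjβ
    by_contra h
    have := (hminmax j (Finset.mem_Icc.mpr ⟨hj1, by omega⟩) h).1
    omega
  -- S(β+1) computation
  have hSβ1 : Ssum σ (β + 1) = ((β : ℝ) + 1) ^ 2 / 4 := by
    have := claim2 (β + 1) (by omega) (by omega)
    rw [this]; push_cast; ring
  have hSβ1' : Ssum σ (β + 1) = (β : ℝ) * σ β + ((β : ℝ) + 1) * σ (β + 1) := by
    unfold Ssum
    rw [← Finset.sum_subset (Finset.Icc_subset_Icc (by omega : 1 ≤ β) le_rfl)
      (fun x hx hx' => by
        have h1 := Finset.mem_Icc.mp hx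
        have h2 : x < β := by
          simp only [Finset.mem_Icc] at hx'
          omega
        rw [hzlow x h1.1 h2, mul_zero])]
    rw [Finset.sum_Icc_succ_top (by omega : β ≤ β + 1), Finset.Icc_self,
      Finset.sum_singleton]
    push_cast; ring
  have hσβ1nn : 0 ≤ σ (β + 1) := hnn (β + 1) (Finset.mem_Icc.mpr ⟨by omega, by omega⟩)
  have bound1 : ((β : ℝ) + 1) / 4 ≤ σ β + σ (β + 1) := by
    have hpos : (0 : ℝ) < (β : ℝ) + 1 := by positivity
    nlinarith [hσβ.le]
  -- per-index bound on [β+2, γ-1]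
  have bound2 : ∀ i ∈ Finset.Icc (β + 2) (γ - 1),
      (1 : ℝ) / 2 - (1 / 4) * (1 / (i : ℝ)) ≤ σ i := by
    intro i hi
    obtain ⟨hi1, hi2⟩ := Finset.mem_Icc.mp hi
    obtain ⟨j, rfl⟩ : ∃ j, i = j + 1 := ⟨i - 1, by omega⟩
    have e1 : Ssum σ (j + 1) = ((j : ℝ) + 1) ^ 2 / 4 := by
      rw [claim2 (j + 1) (by omega) (by omega)]; push_cast; ring
    have e2 : Ssum σ j = (j : ℝ) ^ 2 / 4 := claim2 j (by omega) (by omega)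
    have esplit := Ssum_succ σ j
    have hexp : ((j : ℝ) + 1) ^ 2 / 4 - (j : ℝ) ^ 2 / 4 = (2 * (j : ℝ) + 1) / 4 := by ring
    have hlin : ((j : ℝ) + 1) * σ (j + 1) = (2 * (j : ℝ) + 1) / 4 := by linarith
    have hjpos : (0 : ℝ) < (j : ℝ) + 1 := by positivity
    have hval : σ (j + 1) = (2 * (j : ℝ) + 1) / (4 * ((j : ℝ) + 1)) := by
      field_simp
      linarith
    have hgoal : (1 : ℝ) / 2 - (1 / 4) * (1 / ((j : ℝ) + 1))
        = (2 * (j : ℝ) + 1) / (4 * ((j : ℝ) + 1)) := by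
      field_simp; ring
    push_cast
    rw [hval, ← hgoal]
  -- sum the bounds
  have hA1 : ∑ i ∈ Finset.Icc β (β + 1), σ i = σ β + σ (β + 1) := by
    rw [Finset.sum_Icc_succ_top (by omega : β ≤ β + 1), Finset.Icc_self,
      Finset.sum_singleton]
  have hdisj : Disjoint (Finset.Icc β (β + 1)) (Finset.Icc (β + 2) (γ - 1)) := by
    rw [Finset.disjoint_left]
    intro x hx hx'
    simp only [Finset.mem_Icc] at hx hx'
    omega
  have hsubU : Finset.Icc β (β + 1) ∪ Finset.Icc (β + 2) (γ - 1) ⊆ Finset.Icc 1 k := by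
    intro x hx
    rcases Finset.mem_union.mp hx with h | h <;>
      simp only [Finset.mem_Icc] at h ⊢ <;> omega
  have hslice : σ β + σ (β + 1) + ∑ i ∈ Finset.Icc (β + 2) (γ - 1), σ i
      ≤ ∑ i ∈ Finset.Icc 1 k, σ i := by
    have := Finset.sum_le_sum_of_subset_of_nonneg hsubU
      (fun i hi _ => hnn i hi)
    rwa [Finset.sum_union hdisj, hA1] at this
  -- cardinality and harmonic
  have hcard : (Finset.Icc (β + 2) (γ - 1)).card = γ - β - 2 := by
    rw [Nat.card_Icc]; omega
  have hcardR : (((γ - β - 2 : ℕ)) : ℝ) = (γ : ℝ) - (β : ℝ) - 2 := by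
    have h1 : ((γ - β - 2) + (β + 2)) = γ := by omega
    have := congrArg (fun m : ℕ => (m : ℝ)) h1
    push_cast at this
    linarith
  have hharm : ∑ i ∈ Finset.Icc (β + 2) (γ - 1), (1 : ℝ) / i ≤ Real.log n := by
    have h1 := harmonic_telescope β (γ - 1) (by omega)
    have h2 : Real.log ((γ - 1 : ℕ) : ℝ) ≤ Real.log n := by
      apply Real.log_le_log (by exact_mod_cast (by omega : 0 < γ - 1))
      exact_mod_cast (by omega : γ - 1 ≤ n)
    have h3 : (0 : ℝ) ≤ Real.log ((β : ℝ) + 1) := by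
      apply Real.log_nonneg; linarith
    linarith
  have hsum2 : ((γ : ℝ) - (β : ℝ) - 2) / 2 - (1 / 4) * Real.log n
      ≤ ∑ i ∈ Finset.Icc (β + 2) (γ - 1), σ i := by
    have h1 := Finset.sum_le_sum bound2
    have h2 : ∑ i ∈ Finset.Icc (β + 2) (γ - 1), ((1 : ℝ) / 2 - (1 / 4) * (1 / (i : ℝ)))
        = ((γ : ℝ) - (β : ℝ) - 2) / 2
          - (1 / 4) * ∑ i ∈ Finset.Icc (β + 2) (γ - 1), (1 : ℝ) / i := by
      rw [Finset.sum_sub_distrib, Finset.sum_const, hcard, ← Finset.mul_sum]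
      rw [nsmul_eq_mul, hcardR]
      ring
    rw [h2] at h1
    have h3 : (1 / 4 : ℝ) * ∑ i ∈ Finset.Icc (β + 2) (γ - 1), (1 : ℝ) / i
        ≤ (1 / 4) * Real.log n := by linarith [hharm]
    linarith
  have hρR : (ρ : ℝ) ≤ (β : ℝ) := by exact_mod_cast hρβ
  linarith [hsum, hslice, hsum2, bound1]
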